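/- Let Y ∈ {0,1}^{n×n} be any matrix satisfying Y_{ji} = 1 − Y_{ij} for all i ≠ j. Then every least squares estimate M̂_LS ∈ argmin over M ∈ C_SST of ‖Y − M‖²_F satisfies the Pythagorean identity ‖Y − (1/2)·11ᵀ‖²_F = ‖Y − M̂_LS‖²_F + ‖(1/2)·11ᵀ − M̂_LS‖²_F. -/

import Mathlib

open MeasureTheory ENNReal

noncomputable section

namespace SSTPaper

/-- Squared Frobenius norm of an `n × n` real matrix (as a function). -/
def frobSq {n : ℕ} (A : Fin n → Fin n → ℝ) : ℝ := ∑ i, ∑ j, (A i j) ^ 2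

/-- Trace inner product `⟨A, B⟩ = trace (Aᵀ B)`. -/
def tinner {n : ℕ} (A B : Fin n → Fin n → ℝ) : ℝ := ∑ i, ∑ j, A i j * B i j

/-- The SST class: shifted-skew-symmetric matrices with entries in `[0,1]` that are
`π`-SST for some permutation `π` (where `π` ranks `i` above `j` iff `π j < π i`). -/
def sstClass (n : ℕ) : Set (Fin n → Fin n → ℝ) :=
  {M | (∀ i j, 0 ≤ M i j ∧ M i j ≤ 1) ∧ (∀ i j, M j i = 1 - M i j) ∧
    ∃ π : Equiv.Perm (Fin n), ∀ i j k : Fin n, π j < π i → M j k ≤ M i k}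

/-- The set of SST matrices faithful to a given permutation `π`. -/
def sstOf {n : ℕ} (π : Equiv.Perm (Fin n)) : Set (Fin n → Fin n → ℝ) :=
  {M | (∀ i j, 0 ≤ M i j ∧ M i j ≤ 1) ∧ (∀ i j, M j i = 1 - M i j) ∧
    ∀ i j k : Fin n, π j < π i → M j k ≤ M i k}

/-- Size of the largest indifference set of `M`: the maximal number of identical rows. -/
def kmaxM {n : ℕ} (M : Fin n → Fin n → ℝ) : ℕ :=
  Finset.univ.sup fun i => Set.ncard {j : Fin n | M j = M i}

/-- Number of indifference sets of `M`: the number of distinct rows. -/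
def numSets {n : ℕ} (M : Fin n → Fin n → ℝ) : ℕ := Set.ncard (Set.range M)

/-- SST matrices having an indifference set of size at least `k`. -/
def sstClassK (n k : ℕ) : Set (Fin n → Fin n → ℝ) :=
  {M | M ∈ sstClass n ∧ k ≤ kmaxM M}

/-- SST matrices that respect some indifference-set partition of sizes `k`. -/
def sstClassPart (n s : ℕ) (k : Fin s → ℕ) : Set (Fin n → Fin n → ℝ) :=
  {M | M ∈ sstClass n ∧ ∃ P : Fin s → Finset (Fin n),
    (∀ a b, a ≠ b → Disjoint (P a) (P b)) ∧ (∀ a, (P a).card = k a) ∧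
    (∀ i : Fin n, ∃ a, i ∈ P a) ∧
    ∀ a b : Fin s, ∀ i ∈ P a, ∀ i' ∈ P a, ∀ j ∈ P b, ∀ j' ∈ P b, M i j = M i' j'}

/-- Bernoulli measure on `Bool` with success probability `p`. -/
def bern (p : ℝ) : Measure Bool :=
  (ENNReal.ofReal p) • Measure.dirac true + (ENNReal.ofReal (1 - p)) • Measure.dirac false

/-- The law of the observation matrix `Y`: entries on and above the diagonal independent,
`P[Y i j = 1] = M i j` for `i < j`, `Y j i = 1 - Y i j` off the diagonal, and fair coin
on the diagonal. -/
def obsMeasure {n : ℕ} (M : Fin n → Fin n → ℝ) : Measure (Fin n → Fin n → ℝ) :=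
  Measure.map (fun (ω : Fin n × Fin n → Bool) (i j : Fin n) =>
      if i < j then (if ω (i, j) then (1 : ℝ) else 0)
      else if j < i then 1 - (if ω (j, i) then (1 : ℝ) else 0)
      else (if ω (i, j) then (1 : ℝ) else 0))
    (Measure.pi fun p : Fin n × Fin n => bern (if p.1 = p.2 then 1 / 2 else M p.1 p.2))

/-- The risk `E ‖M̂(Y) − M*‖²_F` of an estimator. -/
def risk {n : ℕ} (Mhat : (Fin n → Fin n → ℝ) → Fin n → Fin n → ℝ)
    (Mstar : Fin n → Fin n → ℝ) : ℝ≥0∞ :=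
  ∫⁻ Y, ENNReal.ofReal (frobSq (Mhat Y - Mstar)) ∂(obsMeasure Mstar)

/-- The `(s, k)`-oracle risk. -/
def oracleRisk (n s : ℕ) (k : Fin s → ℕ) : ℝ≥0∞ :=
  ⨅ (Mhat : (Fin n → Fin n → ℝ) → Fin n → Fin n → ℝ) (_ : Measurable Mhat),
    ⨆ (Mstar : Fin n → Fin n → ℝ) (_ : Mstar ∈ sstClassPart n s k), risk Mhat Mstar

/-- The global adaptivity index of an estimator. -/
def adaptIndex {n : ℕ} (Mhat : (Fin n → Fin n → ℝ) → Fin n → Fin n → ℝ) : ℝ≥0∞ :=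
  ⨆ (s : ℕ) (k : Fin s → ℕ) (_ : ∀ a, 1 ≤ k a) (_ : ∑ a, k a = n) (_ : ∀ a, k a < n),
    (⨆ (Mstar : Fin n → Fin n → ℝ) (_ : Mstar ∈ sstClassPart n s k), risk Mhat Mstar) /
      oracleRisk n s k

/-- Number of wins of item `i`. -/
def winCount {n : ℕ} (Y : Fin n → Fin n → ℝ) (i : Fin n) : ℝ := ∑ j, Y i j

instance {n : ℕ} : MeasurableSpace (Equiv.Perm (Fin n)) := ⊤

/-- Uniform measure on a (finite) set. -/
def unifOn {α : Type*} [Fintype α] [MeasurableSpace α] (s : Set α) : Measure α :=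
  (s.ncard : ℝ≥0∞)⁻¹ • ∑ a ∈ (Set.toFinite s).toFinset, Measure.dirac a

/-- Pythagorean identity for the least squares estimator: for any binary
matrix `Y` with `Y j i = 1 − Y i j` off the diagonal, every minimizer of `‖Y − M‖²_F` over
`C_SST` satisfies `‖Y − ½·11ᵀ‖²_F = ‖Y − M̂_LS‖²_F + ‖½·11ᵀ − M̂_LS‖²_F`. -/
theorem ls_pythagoras {n : ℕ} (hn : 2 ≤ n)
    (Y : Fin n → Fin n → ℝ)
    (hY01 : ∀ i j, Y i j = 0 ∨ Y i j = 1)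
    (hYskew : ∀ i j : Fin n, i ≠ j → Y j i = 1 - Y i j)
    (Mls : Fin n → Fin n → ℝ)
    (hmem : Mls ∈ sstClass n)
    (hmin : ∀ M ∈ sstClass n, frobSq (Y - Mls) ≤ frobSq (Y - M)) :
    frobSq (Y - fun _ _ => (1 : ℝ) / 2) =
      frobSq (Y - Mls) + frobSq ((fun _ _ => (1 : ℝ) / 2) - Mls) := by
  classical
  obtain ⟨hbd, hsk, π, hmono⟩ := hmem
  -- The variational inequality from minimality
  have hvar : ∀ Δ : Fin n → Fin n → ℝ,
      (∀ t : ℝ, 0 < t → t ≤ 1 → (fun i j => Mls i j + t * Δ i j) ∈ sstClass n) →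
      tinner (fun i j => Y i j - Mls i j) Δ ≤ 0 := by
    intro Δ hΔ
    set c := tinner (fun i j => Y i j - Mls i j) Δ with hc
    set S := frobSq Δ with hSdef
    have hS : 0 ≤ S := Finset.sum_nonneg fun i _ => Finset.sum_nonneg fun j _ => sq_nonneg _
    have key : ∀ t : ℝ, 0 < t → t ≤ 1 → 2 * t * c ≤ t ^ 2 * S := by
      intro t ht ht1
      have h1 := hmin _ (hΔ t ht ht1)
      have expand : frobSq (Y - fun i j => Mls i j + t * Δ i j)
          = frobSq (Y - Mls) - 2 * t * c + t ^ 2 * S := by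
        simp only [hc, hSdef, frobSq, tinner, Pi.sub_apply]
        rw [Finset.mul_sum, Finset.mul_sum, ← Finset.sum_sub_distrib, ← Finset.sum_add_distrib]
        refine Finset.sum_congr rfl fun i _ => ?_
        rw [Finset.mul_sum, Finset.mul_sum, ← Finset.sum_sub_distrib, ← Finset.sum_add_distrib]
        exact Finset.sum_congr rfl fun j _ => by ring
      rw [expand] at h1
      linarith
    by_contra hcneg
    push_neg at hcneg
    have hSpos : (0 : ℝ) < S + 1 := by linarith
    set t := min 1 (c / (S + 1)) with htdef
    have ht0 : 0 < t := lt_min one_pos (div_pos hcneg hSpos)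
    have ht1 : t ≤ 1 := min_le_left _ _
    have h2 : t * (S + 1) ≤ c := (le_div_iff₀ hSpos).mp (min_le_right _ _)
    have h3 := key t ht0 ht1
    nlinarith
  -- perturbation toward 1/2
  have hmemA : ∀ t : ℝ, 0 < t → t ≤ 1 →
      (fun i j => Mls i j + t * ((1 : ℝ) / 2 - Mls i j)) ∈ sstClass n := by
    intro t ht ht1
    refine ⟨fun i j => ?_, fun i j => ?_, π, fun i j k hij => ?_⟩
    · obtain ⟨h0, h1⟩ := hbd i j
      constructor <;> nlinarith
    · have h := hsk i j
      show Mls j i + t * ((1 : ℝ) / 2 - Mls j i)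
          = 1 - (Mls i j + t * ((1 : ℝ) / 2 - Mls i j))
      rw [h]; ring
    · have h := hmono i j k hij
      show Mls j k + t * ((1 : ℝ) / 2 - Mls j k) ≤ Mls i k + t * ((1 : ℝ) / 2 - Mls i k)
      nlinarith
  -- the small positive constant ε
  have hne : (Finset.univ : Finset (Fin n × Fin n)).Nonempty :=
    ⟨(⟨0, by omega⟩, ⟨0, by omega⟩), Finset.mem_univ _⟩
  set w : Fin n × Fin n → ℝ := fun p =>
    if Mls p.1 p.2 = 0 ∨ Mls p.1 p.2 = 1 then 1
    else min (Mls p.1 p.2) (1 - Mls p.1 p.2) with hwdef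
  set ε := Finset.univ.inf' hne w with hεdef
  have hεpos : 0 < ε := by
    rw [hεdef, Finset.lt_inf'_iff]
    intro p _
    by_cases h : Mls p.1 p.2 = 0 ∨ Mls p.1 p.2 = 1
    · simp [hwdef, h]
    · push_neg at h
      obtain ⟨h0, h1⟩ := hbd p.1 p.2
      have hx0 : 0 < Mls p.1 p.2 := lt_of_le_of_ne h0 (Ne.symm h.1)
      have hx1 : Mls p.1 p.2 < 1 := lt_of_le_of_ne h1 h.2
      simp only [hwdef, if_neg (not_or.mpr h)]
      exact lt_min hx0 (by linarith)
  have hεle : ∀ i j, ¬(Mls i j = 0 ∨ Mls i j = 1) → ε ≤ Mls i j ∧ ε ≤ 1 - Mls i j := by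
    intro i j h
    have hle : ε ≤ w (i, j) := Finset.inf'_le w (Finset.mem_univ (i, j))
    rw [hwdef] at hle
    simp only [if_neg h] at hle
    exact ⟨le_trans hle (min_le_left _ _), le_trans hle (min_le_right _ _)⟩
  -- perturbation away from 1/2 on interior entries
  set Δ : Fin n → Fin n → ℝ := fun i j =>
    if Mls i j = 0 ∨ Mls i j = 1 then 0 else ε * (Mls i j - 1 / 2) with hΔdef
  have hmemB : ∀ t : ℝ, 0 < t → t ≤ 1 →
      (fun i j => Mls i j + t * Δ i j) ∈ sstClass n := by
    intro t ht ht1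
    have hs0 : 0 < t * ε := mul_pos ht hεpos
    have hs1 : t * ε ≤ ε := by nlinarith
    refine ⟨fun i j => ?_, fun i j => ?_, π, fun i j k hij => ?_⟩
    · obtain ⟨h0, h1⟩ := hbd i j
      by_cases h : Mls i j = 0 ∨ Mls i j = 1
      · simp only [hΔdef, if_pos h, mul_zero, add_zero]
        exact ⟨h0, h1⟩
      · obtain ⟨he1, he2⟩ := hεle i j h
        simp only [hΔdef, if_neg h]
        constructor <;> nlinarith [mul_nonneg hs0.le h0, mul_nonneg hs0.le (by linarith : (0:ℝ) ≤ 1 - Mls i j)]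
    · have hji : Mls j i = 1 - Mls i j := hsk i j
      show Mls j i + t * Δ j i = 1 - (Mls i j + t * Δ i j)
      by_cases h : Mls i j = 0 ∨ Mls i j = 1
      · have h' : Mls j i = 0 ∨ Mls j i = 1 := by
          rcases h with h | h <;> rw [hji, h] <;> norm_num
        simp only [hΔdef, if_pos h, if_pos h', mul_zero, add_zero]
        linarith
      · have h' : ¬(Mls j i = 0 ∨ Mls j i = 1) := by
          push_neg at h ⊢
          constructor <;> rw [hji] <;> intro hc <;> [exact h.2 (by linarith); exact h.1 (by linarith)]
        simp only [hΔdef, if_neg h, if_neg h']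
        rw [hji]; ring
    · have hxy : Mls j k ≤ Mls i k := hmono i j k hij
      obtain ⟨hx0, hx1⟩ := hbd j k
      obtain ⟨hy0, hy1⟩ := hbd i k
      show Mls j k + t * Δ j k ≤ Mls i k + t * Δ i k
      by_cases hx : Mls j k = 0 ∨ Mls j k = 1 <;>
        by_cases hy : Mls i k = 0 ∨ Mls i k = 1
      · simp only [hΔdef, if_pos hx, if_pos hy, mul_zero, add_zero]; exact hxy
      · obtain ⟨he1, he2⟩ := hεle i k hy
        simp only [hΔdef, if_pos hx, if_neg hy, mul_zero, add_zero]
        rcases hx with hx | hx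
        · rw [hx]
          nlinarith [mul_nonneg hs0.le hy0]
        · exfalso; push_neg at hy; exact hy.2 (le_antisymm hy1 (hx ▸ hxy))
      · obtain ⟨he1, he2⟩ := hεle j k hx
        simp only [hΔdef, if_neg hx, if_pos hy, mul_zero, add_zero]
        rcases hy with hy | hy
        · exfalso; push_neg at hx; exact hx.1 (le_antisymm (hy ▸ hxy) hx0)
        · rw [hy]
          nlinarith [mul_nonneg hs0.le (by linarith : (0:ℝ) ≤ 1 - Mls j k)]
      · simp only [hΔdef, if_neg hx, if_neg hy]
        nlinarith [mul_nonneg hs0.le (sub_nonneg.mpr hxy)]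
  -- the inner product is zero
  set A := ∑ i, ∑ j, (Y i j - Mls i j) * (Mls i j - 1 / 2) with hAdef
  have hAge : 0 ≤ A := by
    have h := hvar (fun i j => (1 : ℝ) / 2 - Mls i j) hmemA
    simp only [tinner] at h
    have e : A = -∑ i, ∑ j, (Y i j - Mls i j) * ((1 : ℝ) / 2 - Mls i j) := by
      rw [hAdef, ← Finset.sum_neg_distrib]
      refine Finset.sum_congr rfl fun i _ => ?_
      rw [← Finset.sum_neg_distrib]
      exact Finset.sum_congr rfl fun j _ => by ring
    rw [e]
    linarith
  have hAle : A ≤ 0 := by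
    have h := hvar Δ hmemB
    simp only [tinner] at h
    have per : ∀ i : Fin n, ∀ j : Fin n,
        (Y i j - Mls i j) * (Mls i j - 1 / 2) ≤ ε⁻¹ * ((Y i j - Mls i j) * Δ i j) := by
      intro i j
      by_cases hb : Mls i j = 0 ∨ Mls i j = 1
      · simp only [hΔdef, if_pos hb, mul_zero]
        rcases hb with hb | hb <;> rcases hY01 i j with hy | hy <;> rw [hb, hy] <;> norm_num
      · simp only [hΔdef, if_neg hb]
        have : ε⁻¹ * ((Y i j - Mls i j) * (ε * (Mls i j - 1 / 2)))
            = (Y i j - Mls i j) * (Mls i j - 1 / 2) := by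
          field_simp
        rw [this]
    have h2 : A ≤ ε⁻¹ * ∑ i, ∑ j, (Y i j - Mls i j) * Δ i j := by
      rw [hAdef, Finset.mul_sum]
      refine Finset.sum_le_sum fun i _ => ?_
      rw [Finset.mul_sum]
      exact Finset.sum_le_sum fun j _ => per i j
    have h3 : ε⁻¹ * ∑ i, ∑ j, (Y i j - Mls i j) * Δ i j ≤ 0 :=
      mul_nonpos_iff.mpr (Or.inl ⟨inv_nonneg.mpr hεpos.le, h⟩)
    linarith
  have hA : A = 0 := le_antisymm hAle hAge
  -- expand the squares
  have key : frobSq (Y - fun _ _ => (1 : ℝ) / 2)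
      = frobSq (Y - Mls) + frobSq ((fun _ _ => (1 : ℝ) / 2) - Mls) + 2 * A := by
    simp only [frobSq, Pi.sub_apply, hAdef]
    rw [Finset.mul_sum, ← Finset.sum_add_distrib, ← Finset.sum_add_distrib]
    refine Finset.sum_congr rfl fun i _ => ?_
    rw [Finset.mul_sum, ← Finset.sum_add_distrib, ← Finset.sum_add_distrib]
    exact Finset.sum_congr rfl fun j _ => by ring
  rw [key, hA]
  ring

end SSTPaper
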